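/- Let m₀ and m be positive integers with m₀ dividing m and m > 1, let ω ∈ ℂ be a primitive m₀-th root of unity, and let m₁ be the product of the distinct prime divisors of m (the radical of m). Then ∑_{0 < j < m, gcd(j,m) = 1} ω^j equals μ(m₀) · (m/m₁) · φ(m₁/m₀) if m₀ divides m₁, and equals 0 otherwise, where φ is Euler's totient function and μ is the Möbius function. -/

import Mathlib

open Finset

open ArithmeticFunction ArithmeticFunction.Moebius ArithmeticFunction.zeta in
lemma aux_moebius_sum (n : ℕ) :
    ∑ d ∈ n.divisors, ((μ d : ℤ) : ℂ) = if n = 1 then 1 else 0 := by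
  have h : ((μ * ζ : ArithmeticFunction ℤ) n : ℂ) = ((1 : ArithmeticFunction ℤ) n : ℂ) := by
    rw [moebius_mul_coe_zeta]
  rw [coe_mul_zeta_apply, one_apply] at h
  calc ∑ d ∈ n.divisors, ((μ d : ℤ) : ℂ) = ((∑ d ∈ n.divisors, μ d : ℤ) : ℂ) := by push_cast; rfl
    _ = _ := by rw [h]; split_ifs <;> simp

open ArithmeticFunction ArithmeticFunction.Moebius ArithmeticFunction.zeta in
lemma aux_totient_moebius (n : ℕ) (hn : 0 < n) :
    ∑ d ∈ n.divisors, ((μ d : ℤ) : ℂ) * ((n / d : ℕ) : ℂ) = (Nat.totient n : ℂ) := by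
  have h := (sum_eq_iff_sum_mul_moebius_eq (R := ℂ)
    (f := fun d => (Nat.totient d : ℂ)) (g := fun k => (k : ℂ))).mp ?_ n hn
  · rw [← h, Nat.sum_divisorsAntidiagonal (fun a b => ((μ a : ℤ) : ℂ) * (b : ℂ))]
  · intro k hk
    exact_mod_cast congrArg (Nat.cast : ℕ → ℂ) (Nat.sum_totient k)

lemma aux_squarefree_prod_primes (s : Finset ℕ) (hs : ∀ p ∈ s, p.Prime) :
    Squarefree (∏ p ∈ s, p) := by
  induction s using Finset.induction with
  | empty => simp [squarefree_one]
  | @insert p s hns ih' =>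
    rw [Finset.prod_insert hns]
    have hp := hs p (Finset.mem_insert_self p s)
    have hcop : Nat.Coprime p (∏ q ∈ s, q) := by
      apply Nat.Coprime.prod_right
      intro q hq
      exact (Nat.coprime_primes hp (hs q (Finset.mem_insert_of_mem hq))).mpr
        (fun h => hns (h ▸ hq))
    exact (Nat.squarefree_mul hcop).mpr
      ⟨hp.prime.squarefree, ih' fun q hq => hs q (Finset.mem_insert_of_mem hq)⟩

lemma aux_geom (m₀ : ℕ) (ω : ℂ) (hω : IsPrimitiveRoot ω m₀) {m d : ℕ} (hd : d ∣ m)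
    (hmm : m₀ ∣ m) :
    ∑ t ∈ range (m / d), (ω ^ d) ^ t = if m₀ ∣ d then ((m / d : ℕ) : ℂ) else 0 := by
  split_ifs with h
  · rw [(hω.pow_eq_one_iff_dvd d).mpr h]
    simp
  · have h1 : ω ^ d ≠ 1 := fun hh => h ((hω.pow_eq_one_iff_dvd d).mp hh)
    have h2 : (ω ^ d) ^ (m / d) = 1 := by
      rw [← pow_mul, Nat.mul_div_cancel' hd, hω.pow_eq_one_iff_dvd]
      exact hmm
    rw [geom_sum_eq h1, h2, sub_self, zero_div]

lemma aux_multiples (m d : ℕ) (hd : d ∣ m) (hd0 : d ≠ 0) (f : ℕ → ℂ) :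
    ∑ j ∈ (range m).filter (fun j => d ∣ j), f j = ∑ t ∈ range (m / d), f (d * t) := by
  refine Finset.sum_nbij' (fun j => j / d) (fun t => d * t) ?_ ?_ ?_ ?_ ?_
  · intro j hj
    rw [mem_filter, mem_range] at hj
    rw [mem_range]
    exact Nat.div_lt_div_of_lt_of_dvd hd hj.1
  · intro t ht
    rw [mem_range] at ht
    rw [mem_filter, mem_range]
    refine ⟨?_, Dvd.intro t rfl⟩
    calc d * t < d * (m / d) := mul_lt_mul_of_pos_left ht (by omega)
      _ = m := Nat.mul_div_cancel' hd
  · intro j hj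
    rw [mem_filter] at hj
    exact Nat.mul_div_cancel' hj.2
  · intro t ht
    exact Nat.mul_div_cancel_left t (by omega)
  · intro j hj
    rw [mem_filter] at hj
    rw [Nat.mul_div_cancel' hj.2]

theorem stmt_0 (m₀ m m₁ : ℕ) (hm₀ : 0 < m₀) (hdvd : m₀ ∣ m) (hm : 1 < m)
    (hm₁ : m₁ = ∏ p ∈ m.primeFactors, p)
    (ω : ℂ) (hω : IsPrimitiveRoot ω m₀) :
    ∑ j ∈ (Finset.Ioo 0 m).filter (fun j => Nat.gcd j m = 1), ω ^ j =
      if m₀ ∣ m₁ then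
        (ArithmeticFunction.moebius m₀ : ℂ) * ((m / m₁ : ℕ) : ℂ) *
          ((Nat.totient (m₁ / m₀) : ℕ) : ℂ)
      else 0 := by
  classical
  have hm0 : m ≠ 0 := by omega
  have hm₀0 : m₀ ≠ 0 := hm₀.ne'
  have hm₁dvd : m₁ ∣ m := hm₁ ▸ Nat.prod_primeFactors_dvd m
  have hm₁0 : m₁ ≠ 0 := fun h => hm0 (by simpa [h] using hm₁dvd)
  have hm₁sq : Squarefree m₁ := hm₁ ▸ aux_squarefree_prod_primes _ (fun p hp => Nat.prime_of_mem_primeFactors hp)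
  -- squarefree divisors of m divide m₁
  have hsqdvd : ∀ d : ℕ, d ∣ m → Squarefree d → d ∣ m₁ := by
    intro d hdm hsq
    calc d = ∏ p ∈ d.primeFactors, p := (Nat.prod_primeFactors_of_squarefree hsq).symm
      _ ∣ ∏ p ∈ m.primeFactors, p :=
        Finset.prod_dvd_prod_of_subset _ _ _ (Nat.primeFactors_mono hdm hm0)
      _ = m₁ := hm₁.symm
  -- Step 1: extend the sum to `range m`
  have hfilter : (Finset.Ioo 0 m).filter (fun j => Nat.gcd j m = 1)
      = (range m).filter (fun j => Nat.gcd j m = 1) := by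
    ext j
    simp only [mem_filter, mem_Ioo, mem_range]
    constructor
    · rintro ⟨⟨_, h2⟩, h3⟩; exact ⟨h2, h3⟩
    · rintro ⟨h2, h3⟩
      refine ⟨⟨?_, h2⟩, h3⟩
      rcases Nat.eq_zero_or_pos j with rfl | h
      · simp only [Nat.gcd_zero_left] at h3; omega
      · exact h
  rw [hfilter]
  -- Step 2-3: Möbius indicator and swap
  have key : ∑ j ∈ (range m).filter (fun j => Nat.gcd j m = 1), ω ^ j
      = ∑ d ∈ m.divisors.filter (fun d => m₀ ∣ d),
          ((ArithmeticFunction.moebius d : ℤ) : ℂ) * ((m / d : ℕ) : ℂ) := by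
    rw [Finset.sum_filter]
    calc ∑ j ∈ range m, (if Nat.gcd j m = 1 then ω ^ j else 0)
        = ∑ j ∈ range m, (∑ d ∈ (Nat.gcd j m).divisors,
            ((ArithmeticFunction.moebius d : ℤ) : ℂ)) * ω ^ j := by
          refine Finset.sum_congr rfl fun j _ => ?_
          rw [aux_moebius_sum]
          split_ifs <;> simp
      _ = ∑ j ∈ range m, ∑ d ∈ m.divisors,
            (if d ∣ j then ((ArithmeticFunction.moebius d : ℤ) : ℂ) * ω ^ j else 0) := by
          refine Finset.sum_congr rfl fun j _ => ?_
          rw [Finset.sum_mul, ← Nat.divisors_filter_dvd_of_dvd hm0 (Nat.gcd_dvd_right j m),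
            Finset.sum_filter]
          refine Finset.sum_congr rfl fun d hd => ?_
          have hdm : d ∣ m := Nat.dvd_of_mem_divisors hd
          by_cases h : d ∣ j
          · rw [if_pos h, if_pos (Nat.dvd_gcd h hdm)]
          · rw [if_neg h, if_neg (fun hg => h (hg.trans (Nat.gcd_dvd_left j m)))]
      _ = ∑ d ∈ m.divisors, ∑ j ∈ range m,
            (if d ∣ j then ((ArithmeticFunction.moebius d : ℤ) : ℂ) * ω ^ j else 0) :=
          Finset.sum_comm
      _ = ∑ d ∈ m.divisors, ((ArithmeticFunction.moebius d : ℤ) : ℂ) *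
            (if m₀ ∣ d then ((m / d : ℕ) : ℂ) else 0) := by
          refine Finset.sum_congr rfl fun d hd => ?_
          have hdm : d ∣ m := Nat.dvd_of_mem_divisors hd
          have hd0 : d ≠ 0 := (Nat.pos_of_mem_divisors hd).ne'
          rw [← Finset.sum_filter, ← Finset.mul_sum,
            aux_multiples m d hdm hd0 (fun j => ω ^ j)]
          congr 1
          calc ∑ t ∈ range (m / d), ω ^ (d * t)
              = ∑ t ∈ range (m / d), (ω ^ d) ^ t := by
                refine Finset.sum_congr rfl fun t _ => ?_
                rw [← pow_mul]
            _ = _ := aux_geom m₀ ω hω hdm hdvd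
      _ = _ := by
          rw [Finset.sum_filter]
          refine Finset.sum_congr rfl fun d _ => ?_
          split_ifs <;> simp
  rw [key]
  by_cases h : m₀ ∣ m₁
  · rw [if_pos h]
    set n := m₁ / m₀ with hn
    have hn0 : 0 < n := Nat.div_pos (Nat.le_of_dvd (Nat.pos_of_ne_zero hm₁0) h) hm₀
    have hm₁eq : m₀ * n = m₁ := Nat.mul_div_cancel' h
    -- restrict to divisors of m₁
    have hsub : m₁.divisors.filter (fun d => m₀ ∣ d) ⊆ m.divisors.filter (fun d => m₀ ∣ d) :=
      Finset.filter_subset_filter _ (Nat.divisors_subset_of_dvd hm0 hm₁dvd)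
    rw [← Finset.sum_subset hsub ?_]
    · -- reindex d = m₀ * e
      have := Finset.sum_nbij' (i := fun d => d / m₀) (j := fun e => m₀ * e)
        (s := m₁.divisors.filter (fun d => m₀ ∣ d)) (t := n.divisors)
        (f := fun d => ((ArithmeticFunction.moebius d : ℤ) : ℂ) * ((m / d : ℕ) : ℂ))
        (g := fun e => (ArithmeticFunction.moebius m₀ : ℂ) * ((m / m₁ : ℕ) : ℂ) *
          (((ArithmeticFunction.moebius e : ℤ) : ℂ) * ((n / e : ℕ) : ℂ)))
        ?_ ?_ ?_ ?_ ?_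
      · rw [this, ← Finset.mul_sum, aux_totient_moebius n hn0]
      · intro d hd
        rw [mem_filter] at hd
        obtain ⟨k, rfl⟩ := hd.2
        show m₀ * k / m₀ ∈ n.divisors
        rw [Nat.mul_div_cancel_left k hm₀, Nat.mem_divisors]
        refine ⟨?_, hn0.ne'⟩
        have : m₀ * k ∣ m₀ * n := by rw [hm₁eq]; exact Nat.dvd_of_mem_divisors hd.1
        exact (Nat.mul_dvd_mul_iff_left hm₀).mp this
      · intro e he
        rw [mem_filter, Nat.mem_divisors]
        refine ⟨⟨?_, hm₁0⟩, Dvd.intro e rfl⟩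
        rw [← hm₁eq]
        exact Nat.mul_dvd_mul_left m₀ (Nat.dvd_of_mem_divisors he)
      · intro d hd
        rw [mem_filter] at hd
        exact Nat.mul_div_cancel' hd.2
      · intro e he
        exact Nat.mul_div_cancel_left e hm₀
      · intro d hd
        rw [mem_filter] at hd
        obtain ⟨k, rfl⟩ := hd.2
        have hk0 : k ≠ 0 := by
          rintro rfl
          exact (Nat.pos_of_mem_divisors hd.1).ne' (by simp)
        have hdm₁ : m₀ * k ∣ m₁ := Nat.dvd_of_mem_divisors hd.1
        have hsq : Squarefree (m₀ * k) := hm₁sq.squarefree_of_dvd hdm₁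
        have hcop : Nat.Coprime m₀ k := (Nat.squarefree_mul_iff.mp hsq).1
        have hkn : k ∣ n := by
          have : m₀ * k ∣ m₀ * n := by rw [hm₁eq]; exact hdm₁
          exact (Nat.mul_dvd_mul_iff_left hm₀).mp this
        have hmu : ArithmeticFunction.moebius (m₀ * k)
            = ArithmeticFunction.moebius m₀ * ArithmeticFunction.moebius k :=
          ArithmeticFunction.isMultiplicative_moebius.map_mul_of_coprime hcop
        have hdiv : m / (m₀ * k) = (m / m₁) * (n / k) := by
          obtain ⟨a, ha⟩ := hm₁dvd
          obtain ⟨b, hb⟩ := hkn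
          have h1 : m / m₁ = a := by
            rw [ha]; exact Nat.mul_div_cancel_left a (Nat.pos_of_ne_zero hm₁0)
          have h2 : n / k = b := by
            rw [hb]; exact Nat.mul_div_cancel_left b (Nat.pos_of_ne_zero hk0)
          rw [h1, h2]
          apply Nat.div_eq_of_eq_mul_left (Nat.mul_pos hm₀ (Nat.pos_of_ne_zero hk0))
          rw [ha, ← hm₁eq, hb]; ring
        show ((ArithmeticFunction.moebius (m₀ * k) : ℤ) : ℂ) * ((m / (m₀ * k) : ℕ) : ℂ)
          = (ArithmeticFunction.moebius m₀ : ℂ) * ((m / m₁ : ℕ) : ℂ) *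
            (((ArithmeticFunction.moebius (m₀ * k / m₀) : ℤ) : ℂ) * ((n / (m₀ * k / m₀) : ℕ) : ℂ))
        rw [Nat.mul_div_cancel_left k hm₀, hmu, hdiv]
        push_cast
        ring
    · intro d hd hnd
      rw [mem_filter] at hd hnd
      have : ¬ d ∣ m₁ := by
        intro hdm₁
        exact hnd ⟨Nat.mem_divisors.mpr ⟨hdm₁, hm₁0⟩, hd.2⟩
      have hmu : ArithmeticFunction.moebius d = 0 := by
        by_contra hne
        exact this (hsqdvd d (Nat.dvd_of_mem_divisors hd.1)
          (ArithmeticFunction.moebius_ne_zero_iff_squarefree.mp hne))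
      simp [hmu]
  · rw [if_neg h]
    apply Finset.sum_eq_zero
    intro d hd
    rw [mem_filter] at hd
    have hmu : ArithmeticFunction.moebius d = 0 := by
      by_contra hne
      have hsq : Squarefree d := ArithmeticFunction.moebius_ne_zero_iff_squarefree.mp hne
      exact h (hd.2.trans (hsqdvd d (Nat.dvd_of_mem_divisors hd.1) hsq))
    simp [hmu]
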